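/- Assume the Dirichlet-type equidistribution theorem for Gaussian primes: for β, γ ∈ ℤ[i] with gcd(β, γ) = 1, the count Π(x; θ₁, θ₂; β, γ) of Gaussian primes ρ ≡ β (mod γ) with θ₁ ≤ arg ρ ≤ θ₂ and |ρ|² ≤ x satisfies Π(x; θ₁, θ₂; β, γ) ~ (4(θ₂−θ₁)/(2π·φ(γ)))·x/ln x. Then for any β₁, γ₁, β₂, γ₂ ∈ ℤ[i] with gcd(β₁, γ₁) = gcd(β₂, γ₂) = 1, the set {π₁/π₂ : π₁ ≡ β₁ (mod γ₁) and π₂ ≡ β₂ (mod γ₂) are Gaussian primes} is dense in ℂ. -/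

import Mathlib

open Filter

/-- The argument of a complex number, taken in `[0, 2π)`. -/
noncomputable def arg2pi (z : ℂ) : ℝ :=
  if 0 ≤ z.arg then z.arg else z.arg + 2 * Real.pi

/-- Euler's phi function on ℤ[i]: the number of invertible residue classes mod γ. -/
noncomputable def gaussianPhi (γ : GaussianInt) : ℕ :=
  Nat.card (GaussianInt ⧸ Ideal.span {γ})ˣ


def GP (β γ : GaussianInt) (θ₁ θ₂ x : ℝ) : Set GaussianInt :=
  {ρ : GaussianInt | Prime ρ ∧ γ ∣ β - ρ ∧
    θ₁ ≤ arg2pi (GaussianInt.toComplex ρ) ∧ arg2pi (GaussianInt.toComplex ρ) ≤ θ₂ ∧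
    ‖GaussianInt.toComplex ρ‖ ^ 2 ≤ x}

lemma finite_ball (x : ℝ) : {ρ : GaussianInt | ‖GaussianInt.toComplex ρ‖ ^ 2 ≤ x}.Finite := by
  obtain ⟨n, hn0, hnx⟩ : ∃ n : ℤ, (0:ℤ) ≤ n ∧ x ≤ n :=
    ⟨max 0 ⌈x⌉, le_max_left _ _,
      le_trans (Int.le_ceil x) (by exact_mod_cast le_max_right (0:ℤ) ⌈x⌉)⟩
  apply Set.Finite.subset (Set.Finite.image (fun p : ℤ × ℤ => (⟨p.1, p.2⟩ : GaussianInt))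
    ((Set.finite_Icc (-n) n).prod (Set.finite_Icc (-n) n)))
  intro ρ hρ
  have habs : ‖GaussianInt.toComplex ρ‖ ^ 2 = (ρ.re : ℝ)^2 + (ρ.im : ℝ)^2 := by
    rw [Complex.sq_norm, Complex.normSq_apply, ← GaussianInt.intCast_re, ← GaussianInt.intCast_im]
    ring
  rw [Set.mem_setOf_eq, habs] at hρ
  have hn0' : (0:ℝ) ≤ (n:ℝ) := by exact_mod_cast hn0
  have hnn : (n:ℝ) ≤ (n:ℝ)^2 := by
    rcases hn0.lt_or_eq with h | h
    · have : (1:ℝ) ≤ n := by exact_mod_cast h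
      nlinarith
    · rw [← h]; norm_num
  have key : ∀ a : ℤ, (a:ℝ)^2 ≤ n → -n ≤ a ∧ a ≤ n := by
    intro a ha
    have h2 : (a : ℝ)^2 ≤ (n:ℝ)^2 := le_trans ha hnn
    obtain ⟨l, r⟩ := abs_le_of_sq_le_sq' h2 hn0'
    exact ⟨by exact_mod_cast l, by exact_mod_cast r⟩
  have h1 := key ρ.re (by nlinarith [sq_nonneg ((ρ.im : ℝ))])
  have h2 := key ρ.im (by nlinarith [sq_nonneg ((ρ.re : ℝ))])
  exact ⟨(ρ.re, ρ.im), ⟨Set.mem_Icc.2 h1, Set.mem_Icc.2 h2⟩, rfl⟩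

lemma GP_finite (β γ : GaussianInt) (θ₁ θ₂ x : ℝ) : (GP β γ θ₁ θ₂ x).Finite :=
  (finite_ball x).subset fun ρ h => h.2.2.2.2

lemma card_eq (β γ : GaussianInt) (θ₁ θ₂ x : ℝ) :
    (Nat.card {ρ : GaussianInt // Prime ρ ∧ γ ∣ β - ρ ∧
        θ₁ ≤ arg2pi (GaussianInt.toComplex ρ) ∧
        arg2pi (GaussianInt.toComplex ρ) ≤ θ₂ ∧
        ‖GaussianInt.toComplex ρ‖ ^ 2 ≤ x}) = (GP β γ θ₁ θ₂ x).ncard :=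
  Nat.card_coe_set_eq _

lemma annulus (β γ : GaussianInt) (θ₁ θ₂ : ℝ)
    (hT : Filter.Tendsto (fun x : ℝ =>
        (Nat.card {ρ : GaussianInt // Prime ρ ∧ γ ∣ β - ρ ∧
            θ₁ ≤ arg2pi (GaussianInt.toComplex ρ) ∧
            arg2pi (GaussianInt.toComplex ρ) ≤ θ₂ ∧
            ‖GaussianInt.toComplex ρ‖ ^ 2 ≤ x} : ℝ) /
          (4 * (θ₂ - θ₁) / (2 * Real.pi * (gaussianPhi γ : ℝ)) * (x / Real.log x)))
      atTop (nhds 1))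
    (ε : ℝ) (hε : 0 < ε) :
    ∀ᶠ x : ℝ in atTop, ∃ ρ : GaussianInt, Prime ρ ∧ γ ∣ β - ρ ∧
      θ₁ ≤ arg2pi (GaussianInt.toComplex ρ) ∧ arg2pi (GaussianInt.toComplex ρ) ≤ θ₂ ∧
      x < ‖GaussianInt.toComplex ρ‖ ^ 2 ∧
      ‖GaussianInt.toComplex ρ‖ ^ 2 ≤ (1 + ε) * x := by

  set c : ℝ := 4 * (θ₂ - θ₁) / (2 * Real.pi * (gaussianPhi γ : ℝ)) with hc_def
  set f : ℝ → ℝ := fun x => ((GP β γ θ₁ θ₂ x).ncard : ℝ) with hf_def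
  set g : ℝ → ℝ := fun x => c * (x / Real.log x) with hg_def
  have hT' : Tendsto (fun x => f x / g x) atTop (nhds 1) := by
    refine hT.congr fun x => ?_
    rw [card_eq]
  have hhalf : ∀ᶠ x : ℝ in atTop, 1/2 < f x / g x :=
    hT'.eventually (lt_mem_nhds (by norm_num : (1:ℝ)/2 < 1))
  have hc0 : c ≠ 0 := by
    intro h
    have : Tendsto (fun _ : ℝ => (0:ℝ)) atTop (nhds 1) := by
      refine hT'.congr fun x => ?_
      simp [hg_def, h]
    exact (one_ne_zero : (1:ℝ) ≠ 0) (tendsto_nhds_unique this tendsto_const_nhds)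
  have hcpos : 0 < c := by
    rcases hc0.lt_or_gt with h | h
    · exfalso
      have hev : ∀ᶠ x : ℝ in atTop, f x / g x ≤ 0 := by
        filter_upwards [eventually_gt_atTop (1:ℝ)] with x hx
        have hlog : 0 < Real.log x := Real.log_pos hx
        have hgneg : g x < 0 := by
          have : 0 < x / Real.log x := div_pos (by linarith) hlog
          exact mul_neg_of_neg_of_pos h this
        have hfpos : 0 ≤ f x := by positivity
        exact div_nonpos_of_nonneg_of_nonpos hfpos hgneg.le
      obtain ⟨x, h1, h2⟩ := (hhalf.and hev).exists
      linarith
    · exact h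
  have hgpos : ∀ᶠ x : ℝ in atTop, 0 < g x := by
    filter_upwards [eventually_gt_atTop (1:ℝ)] with x hx
    exact mul_pos hcpos (div_pos (by linarith) (Real.log_pos hx))
  have hfpos : ∀ᶠ x : ℝ in atTop, 0 < f x := by
    filter_upwards [hhalf, hgpos] with x h1 h2
    have := (lt_div_iff₀ h2).1 h1
    linarith
  -- the scaled versions
  have hm : Tendsto (fun x : ℝ => (1 + ε) * x) atTop atTop :=
    Tendsto.const_mul_atTop (by linarith) tendsto_id
  have h2 : Tendsto (fun x => f ((1+ε)*x) / g ((1+ε)*x)) atTop (nhds 1) := hT'.comp hm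
  have hL : Real.log (1+ε) ≥ 0 := Real.log_nonneg (by linarith)
  have h3 : Tendsto (fun x => g ((1+ε)*x) / g x) atTop (nhds (1+ε)) := by
    have base : Tendsto (fun y : ℝ => (1+ε) * (1 - Real.log (1+ε) / (Real.log (1+ε) + y)))
        atTop (nhds ((1+ε) * (1 - 0))) := by
      apply Tendsto.const_mul
      apply Tendsto.const_sub
      exact Tendsto.div_atTop tendsto_const_nhds (tendsto_atTop_add_const_left _ _ tendsto_id)
    have base' : Tendsto (fun x : ℝ =>
        (1+ε) * (1 - Real.log (1+ε) / (Real.log (1+ε) + Real.log x))) atTop (nhds ((1+ε) * (1 - 0))) :=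
      base.comp Real.tendsto_log_atTop
    rw [show (1+ε) * (1 - (0:ℝ)) = 1 + ε by ring] at base'
    refine base'.congr' ?_
    filter_upwards [eventually_gt_atTop (1:ℝ)] with x hx
    have hlog : 0 < Real.log x := Real.log_pos hx
    have hx0 : x ≠ 0 := by linarith
    have hsum : Real.log (1+ε) + Real.log x ≠ 0 := by positivity
    have hlogm : Real.log ((1+ε)*x) = Real.log (1+ε) + Real.log x :=
      Real.log_mul (by linarith) hx0
    simp only [hg_def, hlogm]
    field_simp
    ring
  have h4 : Tendsto (fun x => g x / f x) atTop (nhds 1) := by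
    have := hT'.inv₀ one_ne_zero
    rw [inv_one] at this
    refine this.congr fun x => ?_
    rw [inv_div]
  have h5 : Tendsto (fun x => f ((1+ε)*x) / f x) atTop (nhds (1+ε)) := by
    have hprod := (h2.mul h3).mul h4
    rw [show (1:ℝ) * (1+ε) * 1 = 1 + ε by ring] at hprod
    refine hprod.congr' ?_
    filter_upwards [hgpos, hfpos, hm.eventually hgpos] with x hg1 hf1 hg2
    field_simp
  have h6 : ∀ᶠ x : ℝ in atTop, 1 < f ((1+ε)*x) / f x :=
    h5.eventually (lt_mem_nhds (by linarith : (1:ℝ) < 1 + ε))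
  filter_upwards [h6, hfpos, eventually_ge_atTop (0:ℝ)] with x hlt hf1 hx0
  have hflt : f x < f ((1+ε)*x) := by
    have := (lt_div_iff₀ hf1).1 hlt
    linarith
  have hncard : (GP β γ θ₁ θ₂ x).ncard < (GP β γ θ₁ θ₂ ((1+ε)*x)).ncard := by
    simp only [hf_def] at hflt
    exact_mod_cast hflt
  have hne : ¬ (GP β γ θ₁ θ₂ ((1+ε)*x) ⊆ GP β γ θ₁ θ₂ x) := by
    intro hsub
    exact absurd (Set.ncard_le_ncard hsub (GP_finite _ _ _ _ _)) (by omega)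
  obtain ⟨ρ, hmem, hnmem⟩ := Set.not_subset.1 hne
  obtain ⟨hp, hd, ha1, ha2, hb⟩ := hmem
  refine ⟨ρ, hp, hd, ha1, ha2, ?_, hb⟩
  by_contra hcon
  push_neg at hcon
  exact hnmem ⟨hp, hd, ha1, ha2, hcon⟩

section
open Complex

lemma arg2pi_nonneg (z : ℂ) : 0 ≤ arg2pi z := by
  unfold arg2pi; split
  · assumption
  · have := (Complex.arg_mem_Ioc z).1
    linarith [Real.pi_pos]

lemma arg2pi_lt (z : ℂ) : arg2pi z < 2 * Real.pi := by
  unfold arg2pi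
  have h1 := (Complex.arg_mem_Ioc z).1
  have h2 := (Complex.arg_mem_Ioc z).2
  have := Real.pi_pos
  split <;> linarith

lemma abs_mul_exp_arg2pi (z : ℂ) :
    (‖z‖ : ℂ) * Complex.exp (arg2pi z * I) = z := by
  unfold arg2pi
  split
  · exact Complex.norm_mul_exp_arg_mul_I z
  · push_cast
    rw [add_mul, Complex.exp_add, Complex.exp_two_pi_mul_I, mul_one]
    exact Complex.norm_mul_exp_arg_mul_I z

lemma exp_close (u v : ℝ) (h : |u - v| ≤ 1) :
    ‖Complex.exp (u * I) - Complex.exp (v * I)‖ ≤ 2 * |u - v| := by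
  have key : Complex.exp ((u:ℂ) * I) - Complex.exp ((v:ℂ) * I)
      = Complex.exp ((v:ℂ) * I) * (Complex.exp (((u:ℂ) - v) * I) - 1) := by
    rw [mul_sub, ← Complex.exp_add, mul_one]
    ring_nf
  have habs : ‖((u:ℂ) - v) * I‖ = |u - v| := by
    rw [norm_mul, Complex.norm_I, mul_one]
    rw [show ((u:ℂ) - v) = ((u - v : ℝ) : ℂ) by push_cast; ring, Complex.norm_real, Real.norm_eq_abs]
  rw [key, norm_mul, Complex.norm_exp_ofReal_mul_I, one_mul]
  have h2 := Complex.norm_exp_sub_one_le (x := ((u:ℂ) - v) * I) (by rw [habs]; exact h)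
  rwa [habs] at h2

end

/-- Assuming the Dirichlet-type equidistribution theorem for Gaussian primes, the set of
quotients of Gaussian primes in fixed invertible congruence classes is dense in ℂ. -/
theorem quotients_of_gaussian_primes_in_congruence_classes_dense
    (hKub : ∀ β γ : GaussianInt, IsCoprime β γ →
      ∀ θ₁ θ₂ : ℝ, 0 ≤ θ₁ → θ₁ < θ₂ → θ₂ ≤ 2 * Real.pi →
      Tendsto (fun x : ℝ =>
          (Nat.card {ρ : GaussianInt // Prime ρ ∧ γ ∣ β - ρ ∧
              θ₁ ≤ arg2pi (GaussianInt.toComplex ρ) ∧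
              arg2pi (GaussianInt.toComplex ρ) ≤ θ₂ ∧
              ‖GaussianInt.toComplex ρ‖ ^ 2 ≤ x} : ℝ) /
            (4 * (θ₂ - θ₁) / (2 * Real.pi * (gaussianPhi γ : ℝ)) * (x / Real.log x)))
        atTop (nhds 1))
    (β₁ γ₁ β₂ γ₂ : GaussianInt) (h₁ : IsCoprime β₁ γ₁) (h₂ : IsCoprime β₂ γ₂) :
    Dense {z : ℂ | ∃ π₁ π₂ : GaussianInt, Prime π₁ ∧ Prime π₂ ∧
      γ₁ ∣ β₁ - π₁ ∧ γ₂ ∣ β₂ - π₂ ∧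
      z = GaussianInt.toComplex π₁ / GaussianInt.toComplex π₂} := by
  set S : Set ℂ := {z : ℂ | ∃ π₁ π₂ : GaussianInt, Prime π₁ ∧ Prime π₂ ∧
      γ₁ ∣ β₁ - π₁ ∧ γ₂ ∣ β₂ - π₂ ∧
      z = GaussianInt.toComplex π₁ / GaussianInt.toComplex π₂} with hS_def
  have H : ∀ w : ℂ, w ≠ 0 → ∀ ε : ℝ, 0 < ε → ∃ s ∈ S, ‖s - w‖ < ε := by
    intro w hw ε hε
    set r : ℝ := ‖w‖ with hr_def
    have hr : 0 < r := norm_pos_iff.mpr hw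
    set θ : ℝ := arg2pi w with hθ_def
    have hθ0 : 0 ≤ θ := arg2pi_nonneg w
    have hθ2 : θ < 2 * Real.pi := arg2pi_lt w
    have hπ := Real.pi_gt_three
    set δ : ℝ := min (ε / (6 * r)) (1/2) with hδ_def
    have hδ : 0 < δ := lt_min (by positivity) (by norm_num)
    have hδhalf : δ ≤ 1/2 := min_le_right _ _
    have hδε : δ ≤ ε / (6 * r) := min_le_left _ _
    -- choose the two angular windows
    obtain ⟨a, b, k, ha0, haup, hb0, hbup, hba, hek⟩ :
        ∃ a b k : ℝ, 0 ≤ a ∧ a + δ ≤ 2 * Real.pi ∧ 0 ≤ b ∧ b + δ ≤ 2 * Real.pi ∧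
          b - a = θ - k ∧
          Complex.exp (((θ - k : ℝ) : ℂ) * Complex.I) = Complex.exp ((θ : ℂ) * Complex.I) := by
      by_cases hcase : θ ≤ Real.pi
      · exact ⟨0, θ, 0, le_refl 0, by linarith, hθ0, by linarith, by ring, by norm_num⟩
      · refine ⟨2 * Real.pi - θ, 0, 2 * Real.pi, by linarith, by linarith, le_refl 0,
          by linarith, by ring, ?_⟩
        push_cast
        rw [sub_mul, Complex.exp_sub, Complex.exp_two_pi_mul_I, div_one]
    -- apply the annulus lemma to both congruence classes
    have E₂ := annulus β₂ γ₂ a (a + δ)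
      (hKub β₂ γ₂ h₂ a (a + δ) ha0 (by linarith) haup) δ hδ
    have E₁ := annulus β₁ γ₁ b (b + δ)
      (hKub β₁ γ₁ h₁ b (b + δ) hb0 (by linarith) hbup) δ hδ
    obtain ⟨X₂, hX₂⟩ := eventually_atTop.1 E₂
    obtain ⟨X₁, hX₁⟩ := eventually_atTop.1 E₁
    set x : ℝ := max (max X₂ 1) (X₁ / r ^ 2) with hx_def
    have hxX₂ : X₂ ≤ x := le_trans (le_max_left _ _) (le_max_left _ _)
    have hx1 : (1:ℝ) ≤ x := le_trans (le_max_right _ _) (le_max_left _ _)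
    have hxr : X₁ / r ^ 2 ≤ x := le_max_right _ _
    obtain ⟨π₂, hp₂, hd₂, hα₂l, hα₂u, hq₂l, hq₂u⟩ := hX₂ x hxX₂
    set q₂ : ℝ := ‖GaussianInt.toComplex π₂‖ with hq₂_def
    have hq₂pos : 0 < q₂ := by
      rcases (norm_nonneg (GaussianInt.toComplex π₂)).lt_or_eq with h | h
      · exact h
      · exfalso
        have hsq : q₂ ^ 2 = 0 := by rw [hq₂_def, ← h]; ring
        linarith
    set t : ℝ := r ^ 2 * q₂ ^ 2 with ht_def
    have htX₁ : X₁ ≤ t := by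
      have h1 : X₁ ≤ r ^ 2 * x := by
        rw [div_le_iff₀ (by positivity)] at hxr
        linarith [hxr]
      have h2 : r ^ 2 * x ≤ r ^ 2 * q₂ ^ 2 := mul_le_mul_of_nonneg_left hq₂l.le (sq_nonneg r)
      rw [ht_def]
      linarith
    obtain ⟨π₁, hp₁, hd₁, hα₁l, hα₁u, hq₁l, hq₁u⟩ := hX₁ t htX₁
    set q₁ : ℝ := ‖GaussianInt.toComplex π₁‖ with hq₁_def
    have htpos : 0 < t := by rw [ht_def]; positivity
    have hq₁pos : 0 < q₁ := by
      rcases (norm_nonneg (GaussianInt.toComplex π₁)).lt_or_eq with h | h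
      · exact h
      · exfalso
        have hsq : q₁ ^ 2 = 0 := by rw [hq₁_def, ← h]; ring
        linarith
    -- the candidate point
    refine ⟨GaussianInt.toComplex π₁ / GaussianInt.toComplex π₂,
      ⟨π₁, π₂, hp₁, hp₂, hd₁, hd₂, rfl⟩, ?_⟩
    set α₁ : ℝ := arg2pi (GaussianInt.toComplex π₁) with hα₁_def
    set α₂ : ℝ := arg2pi (GaussianInt.toComplex π₂) with hα₂_def
    set q : ℝ := q₁ / q₂ with hq_def
    have hqpos : 0 < q := div_pos hq₁pos hq₂pos
    -- modulus bounds
    have hql : r < q := by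
      have h1 : (r * q₂) ^ 2 < q₁ ^ 2 := by
        have he : (r * q₂) ^ 2 = t := by rw [ht_def]; ring
        rw [he]; exact hq₁l
      have h2 : r * q₂ < q₁ := lt_of_pow_lt_pow_left₀ 2 hq₁pos.le h1
      rw [hq_def, lt_div_iff₀ hq₂pos]
      exact h2
    have hqu : q ≤ r * (1 + δ) := by
      have h1 : q₁ ^ 2 ≤ (r * (1 + δ) * q₂) ^ 2 := by
        have he : (r * (1 + δ) * q₂) ^ 2 = (1 + δ) * t + δ * (1 + δ) * t := by
          rw [ht_def]; ring
        have hnn : 0 ≤ δ * (1 + δ) * t := by positivity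
        rw [he]; linarith
      have h2 : q₁ ≤ r * (1 + δ) * q₂ := le_of_sq_le_sq h1 (by positivity)
      rw [hq_def, div_le_iff₀ hq₂pos]
      exact h2
    have hqr : |q - r| ≤ r * δ := by
      have hrδ : 0 ≤ r * δ := by positivity
      rw [abs_le]
      constructor
      · linarith
      · nlinarith [hqu]
    -- argument bound
    have hΔ : |α₁ - α₂ - (θ - k)| ≤ δ := by
      rw [abs_le, ← hba]
      constructor <;> linarith
    -- rewrite the two complex numbers in polar form
    have hc₂ : GaussianInt.toComplex π₂ ≠ 0 := by
      intro h0
      rw [h0] at hq₂_def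
      simp at hq₂_def
      exact absurd hq₂_def (by linarith)
    have hpol₁ : GaussianInt.toComplex π₁ = (q₁ : ℂ) * Complex.exp ((α₁ : ℂ) * Complex.I) :=
      (abs_mul_exp_arg2pi _).symm
    have hpol₂ : GaussianInt.toComplex π₂ = (q₂ : ℂ) * Complex.exp ((α₂ : ℂ) * Complex.I) :=
      (abs_mul_exp_arg2pi _).symm
    have hpolw : w = (r : ℂ) * Complex.exp (((θ - k : ℝ) : ℂ) * Complex.I) := by
      rw [hek]
      exact (abs_mul_exp_arg2pi w).symm
    have hs_eq : GaussianInt.toComplex π₁ / GaussianInt.toComplex π₂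
        = (q : ℂ) * Complex.exp (((α₁ - α₂ : ℝ) : ℂ) * Complex.I) := by
      rw [hpol₁, hpol₂, hq_def]
      push_cast
      rw [sub_mul, Complex.exp_sub]
      have hexp₂ : Complex.exp ((α₂ : ℂ) * Complex.I) ≠ 0 := Complex.exp_ne_zero _
      have hq₂C : (q₂ : ℂ) ≠ 0 := by exact_mod_cast hq₂pos.ne'
      field_simp
    rw [hs_eq, hpolw]
    -- triangle inequality
    have tri := norm_sub_le_norm_sub_add_norm_sub ((q : ℂ) * Complex.exp (((α₁ - α₂ : ℝ) : ℂ) * Complex.I))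
      ((r : ℂ) * Complex.exp (((α₁ - α₂ : ℝ) : ℂ) * Complex.I))
      ((r : ℂ) * Complex.exp (((θ - k : ℝ) : ℂ) * Complex.I))
    have e1 : ‖(q : ℂ) * Complex.exp (((α₁ - α₂ : ℝ) : ℂ) * Complex.I)
        - (r : ℂ) * Complex.exp (((α₁ - α₂ : ℝ) : ℂ) * Complex.I)‖ = |q - r| := by
      rw [← sub_mul, norm_mul, Complex.norm_exp_ofReal_mul_I, mul_one,
        show ((q : ℂ) - r) = ((q - r : ℝ) : ℂ) by push_cast; ring, Complex.norm_real, Real.norm_eq_abs]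
    have e2 : ‖(r : ℂ) * Complex.exp (((α₁ - α₂ : ℝ) : ℂ) * Complex.I)
        - (r : ℂ) * Complex.exp (((θ - k : ℝ) : ℂ) * Complex.I)‖
        = r * ‖Complex.exp (((α₁ - α₂ : ℝ) : ℂ) * Complex.I)
          - Complex.exp (((θ - k : ℝ) : ℂ) * Complex.I)‖ := by
      rw [← mul_sub, norm_mul, Complex.norm_real, Real.norm_eq_abs, abs_of_nonneg hr.le]
    have e3 := exp_close (α₁ - α₂) (θ - k) (by
      calc |α₁ - α₂ - (θ - k)| ≤ δ := hΔ
        _ ≤ 1 := by linarith)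
    have hfinal : 3 * r * δ < ε := by
      have h6 : 6 * r * δ ≤ ε := by
        rw [le_div_iff₀ (by positivity)] at hδε
        linarith [hδε]
      have hrδ : 0 < r * δ := mul_pos hr hδ
      linarith
    calc ‖(q : ℂ) * Complex.exp (((α₁ - α₂ : ℝ) : ℂ) * Complex.I)
          - (r : ℂ) * Complex.exp (((θ - k : ℝ) : ℂ) * Complex.I)‖
        ≤ |q - r| + r * ‖Complex.exp (((α₁ - α₂ : ℝ) : ℂ) * Complex.I)
            - Complex.exp (((θ - k : ℝ) : ℂ) * Complex.I)‖ := by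
          rw [← e1, ← e2]; exact tri
      _ ≤ r * δ + r * (2 * |α₁ - α₂ - (θ - k)|) := by
          gcongr
      _ ≤ r * δ + r * (2 * δ) := by gcongr
      _ = 3 * r * δ := by ring
      _ < ε := hfinal
  -- now deduce density
  rw [Metric.dense_iff]
  intro w rad hrad
  by_cases hw : w = 0
  · obtain ⟨s, hsS, hd⟩ := H ((rad / 2 : ℝ) : ℂ)
      (by simp only [ne_eq, Complex.ofReal_eq_zero]; intro h; linarith) (rad / 2) (by linarith)
    refine ⟨s, Metric.mem_ball.2 ?_, hsS⟩
    rw [hw, Complex.dist_eq, sub_zero]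
    calc ‖s‖ ≤ ‖s - ((rad / 2 : ℝ) : ℂ)‖ + ‖((rad / 2 : ℝ) : ℂ)‖ := by
          nth_rewrite 1 [show s = (s - ((rad / 2 : ℝ) : ℂ)) + ((rad / 2 : ℝ) : ℂ) by ring]
          exact norm_add_le _ _
      _ = ‖s - ((rad / 2 : ℝ) : ℂ)‖ + rad / 2 := by
          rw [Complex.norm_real, Real.norm_eq_abs, abs_of_nonneg (by linarith : (0:ℝ) ≤ rad / 2)]
      _ < rad / 2 + rad / 2 := by linarith
      _ = rad := by ring
  · obtain ⟨s, hsS, hd⟩ := H w hw rad hrad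
    exact ⟨s, Metric.mem_ball.2 (by rw [Complex.dist_eq]; exact hd), hsS⟩
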